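/- Suppose f : ℝ^d → ℝ is twice continuously differentiable with γ-Lipschitz Hessian. Fix μ ∈ ℝ^d, α > 0, and a symmetric positive definite d×d matrix Σ with Σ ⪯ τ^{-1}·I for some τ > 0. Let u ~ N(0, I_d) and set ν = (f(μ + αΣ^{1/2}u) − f(μ − αΣ^{1/2}u) − 2α⟨∇f(μ), Σ^{1/2}u⟩)/(2α). Then for any 0 < δ < 1, with probability at least 1 − δ, |ν| ≤ γα²·(2d + 3 log(1/δ))^{3/2}/(6τ^{3/2}). -/

import Mathlib

open MeasureTheory ProbabilityTheory Matrix
open scoped BigOperators RealInnerProductSpace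

open scoped ENNReal NNReal

noncomputable section

open scoped ComplexOrder in
/-- The square root of a positive semidefinite matrix (as defined in the older Mathlib). -/
def Matrix.PosSemidef.sqrt {n 𝕜 : Type*} [Fintype n] [RCLike 𝕜] [DecidableEq n] {A : Matrix n n 𝕜}
    (hA : A.PosSemidef) : Matrix n n 𝕜 :=
  (hA.1.eigenvectorUnitary : Matrix n n 𝕜) * diagonal ((↑) ∘ (√·) ∘ hA.1.eigenvalues) *
  (star hA.1.eigenvectorUnitary : Matrix n n 𝕜)

abbrev Vec (d : ℕ) := EuclideanSpace ℝ (Fin d)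
abbrev Mat (d : ℕ) := Matrix (Fin d) (Fin d) ℝ

/-- View a Euclidean vector as a plain function. -/
def toPi {d : ℕ} (u : Vec d) : Fin d → ℝ := u
/-- View a plain function as a Euclidean vector. -/
def ofPi {d : ℕ} (u : Fin d → ℝ) : Vec d := WithLp.toLp 2 u

/-- Matrix-vector multiplication on Euclidean space. -/
def mvec {d : ℕ} (A : Mat d) (u : Vec d) : Vec d := ofPi (A.mulVec (toPi u))

/-- The standard Gaussian measure N(0, I_d) on ℝ^d. -/
def gaussD (d : ℕ) : Measure (Vec d) :=
  (Measure.pi fun _ : Fin d => gaussianReal 0 1).map (MeasurableEquiv.toLp 2 (Fin d → ℝ))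

/-- Frobenius norm of a matrix. -/
def matFrobNorm {m n : ℕ} (A : Matrix (Fin m) (Fin n) ℝ) : ℝ :=
  Real.sqrt (∑ i, ∑ j, (A i j) ^ 2)

/-- Operator (spectral) norm of a matrix. -/
def matOpNorm {m n : ℕ} (A : Matrix (Fin m) (Fin n) ℝ) : ℝ :=
  ‖LinearMap.toContinuousLinearMap (Matrix.toEuclideanLin A)‖

/-- Loewner order `A ⪯ B`. -/
def loeLE {d : ℕ} (A B : Mat d) : Prop := (B - A).PosSemidef

/-- Hessian matrix of `f` at `x`. -/
def hess {d : ℕ} (f : Vec d → ℝ) (x : Vec d) : Mat d :=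
  Matrix.of fun i j =>
    iteratedFDeriv ℝ 2 f x ![EuclideanSpace.single i 1, EuclideanSpace.single j 1]

/-- Membership in `S = {Σ symmetric : ζ⁻¹ I ⪯ Σ ⪯ τ⁻¹ I}`. -/
def Smem {d : ℕ} (τ ζ : ℝ) (A : Mat d) : Prop :=
  A.IsSymm ∧ loeLE (ζ⁻¹ • 1) A ∧ loeLE A (τ⁻¹ • 1)

/-- Membership in `S' = {A symmetric : τ I ⪯ A ⪯ ζ I}`. -/
def S'mem {d : ℕ} (τ ζ : ℝ) (A : Mat d) : Prop :=
  A.IsSymm ∧ loeLE (τ • 1) A ∧ loeLE A (ζ • 1)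

/-- The regularized reparameterized objective `Q_α(μ, Σ)`. -/
def Qa {d : ℕ} (f : Vec d → ℝ) (α : ℝ) (μ : Vec d) (S : Mat d) (hS : S.PosSemidef) : ℝ :=
  (∫ u, f (μ + α • mvec hS.sqrt u) ∂ gaussD d) - α ^ 2 / 2 * Real.log S.det

lemma gauss_exp_sq_integrable :
    Integrable (fun x : ℝ => Real.exp (x ^ 2 / 3)) (gaussianReal 0 1) := by
  rw [gaussianReal_of_var_ne_zero _ one_ne_zero]
  unfold gaussianPDF
  rw [integrable_withDensity_iff (measurable_gaussianPDFReal 0 1).ennreal_ofReal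
    (Filter.Eventually.of_forall fun x => ENNReal.ofReal_lt_top)]
  apply Integrable.mono' (g := fun x : ℝ => ((Real.sqrt (2 * Real.pi))⁻¹) * Real.exp (-(1/6) * x ^ 2))
  · exact (integrable_exp_neg_mul_sq (by norm_num)).const_mul _
  · apply Measurable.aestronglyMeasurable
    exact (Real.measurable_exp.comp ((measurable_id.pow_const 2).div_const 3)).mul
      ((measurable_gaussianPDFReal 0 1).ennreal_ofReal.ennreal_toReal)
  · refine Filter.Eventually.of_forall fun x => ?_
    rw [Real.norm_eq_abs, gaussianPDFReal]
    simp only [NNReal.coe_one, mul_one, sub_zero]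
    rw [ENNReal.toReal_ofReal (by positivity), abs_of_nonneg (by positivity)]
    rw [mul_comm, mul_assoc, ← Real.exp_add]
    apply le_of_eq
    congr 1
    ring

lemma gauss_exp_sq_integral :
    ∫ x : ℝ, Real.exp (x ^ 2 / 3) ∂(gaussianReal 0 1) = Real.sqrt 3 := by
  rw [gaussianReal_of_var_ne_zero _ one_ne_zero]
  unfold gaussianPDF
  rw [show (fun x => ENNReal.ofReal (gaussianPDFReal 0 1 x))
      = (fun x => ((gaussianPDFReal 0 1 x).toNNReal : ℝ≥0∞)) from rfl]
  rw [integral_withDensity_eq_integral_smul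
    ((measurable_gaussianPDFReal 0 1).real_toNNReal)]
  have : ∀ x : ℝ, (gaussianPDFReal 0 1 x).toNNReal • Real.exp (x ^ 2 / 3)
      = ((Real.sqrt (2 * Real.pi))⁻¹) * Real.exp (-(1/6) * x ^ 2) := by
    intro x
    rw [NNReal.smul_def, smul_eq_mul, Real.coe_toNNReal _ (gaussianPDFReal_nonneg 0 1 x),
      gaussianPDFReal]
    simp only [NNReal.coe_one, mul_one, sub_zero]
    rw [mul_assoc, ← Real.exp_add]
    congr 2
    ring
  simp_rw [this]
  rw [integral_const_mul, integral_gaussian]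
  rw [← Real.sqrt_inv, ← Real.sqrt_mul (by positivity)]
  congr 1
  have hπ : (Real.pi : ℝ) ≠ 0 := Real.pi_ne_zero
  field_simp
  ring

lemma pi_exp_integral (d : ℕ) :
    ∫ v : Fin d → ℝ, ∏ i, Real.exp (v i ^ 2 / 3) ∂(Measure.pi fun _ => gaussianReal 0 1)
      = (Real.sqrt 3) ^ d := by
  letI : MeasureSpace ℝ := ⟨gaussianReal 0 1⟩
  haveI : SigmaFinite (volume : Measure ℝ) := by
    show SigmaFinite (gaussianReal 0 1); infer_instance
  have h : ∫ v : Fin d → ℝ, ∏ i, Real.exp (v i ^ 2 / 3) ∂(volume : Measure (Fin d → ℝ)) = _ :=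
    MeasureTheory.integral_fintype_prod_eq_pow (ι := Fin d) (fun x : ℝ => Real.exp (x ^ 2 / 3)) (μ := volume)
  rw [show (Measure.pi fun _ : Fin d => gaussianReal 0 1) = (volume : Measure (Fin d → ℝ)) from rfl,
    h, show (volume : Measure ℝ) = gaussianReal 0 1 from rfl, gauss_exp_sq_integral,
    Fintype.card_fin]

lemma pi_exp_integrable (d : ℕ) :
    Integrable (fun v : Fin d → ℝ => ∏ i, Real.exp (v i ^ 2 / 3))
      (Measure.pi fun _ => gaussianReal 0 1) := by
  letI : MeasureSpace ℝ := ⟨gaussianReal 0 1⟩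
  haveI : SigmaFinite (volume : Measure ℝ) := by
    show SigmaFinite (gaussianReal 0 1); infer_instance
  exact MeasureTheory.Integrable.fintype_prod (f := fun _ : Fin d => fun x : ℝ => Real.exp (x ^ 2 / 3))
    (fun _ => gauss_exp_sq_integrable)

-- chi-square tail: measure of {v | t ≤ ∑ v i ^ 2} ≤ ofReal (√3^d * exp (-t/3))
lemma chisq_tail (d : ℕ) (t : ℝ) :
    (Measure.pi fun _ : Fin d => gaussianReal 0 1) {v | t ≤ ∑ i, v i ^ 2}
      ≤ ENNReal.ofReal ((Real.sqrt 3) ^ d * Real.exp (-t / 3)) := by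
  set μ := Measure.pi fun _ : Fin d => gaussianReal 0 1
  have hint : Integrable (fun v : Fin d → ℝ => Real.exp ((∑ i, v i ^ 2) / 3)) μ := by
    have := pi_exp_integrable d
    simpa [← Real.exp_sum, Finset.sum_div] using this
  have hM := mul_meas_ge_le_integral_of_nonneg
    (Filter.Eventually.of_forall fun v : Fin d → ℝ => (Real.exp_pos _).le) hint (Real.exp (t / 3))
  have hset : {v : Fin d → ℝ | Real.exp (t / 3) ≤ Real.exp ((∑ i, v i ^ 2) / 3)}
      = {v | t ≤ ∑ i, v i ^ 2} := by
    ext v; simp only [Set.mem_setOf_eq, Real.exp_le_exp]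
    constructor <;> intro h <;> linarith
  rw [hset] at hM
  -- hM : exp(t/3) * (μ {v | t ≤ ∑ v i ^2}).toReal ≤ ∫ exp((∑ v i^2)/3)
  have hI : ∫ v : Fin d → ℝ, Real.exp ((∑ i, v i ^ 2) / 3) ∂μ = (Real.sqrt 3) ^ d := by
    rw [← pi_exp_integral d]
    congr 1; ext v; rw [← Real.exp_sum]; congr 1; rw [Finset.sum_div]
  rw [hI] at hM
  have hfin : μ {v | t ≤ ∑ i, v i ^ 2} ≠ ⊤ := by
    haveI : IsProbabilityMeasure μ := by infer_instance
    exact measure_ne_top μ _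
  have : (μ {v | t ≤ ∑ i, v i ^ 2}).toReal ≤ (Real.sqrt 3) ^ d * Real.exp (-t / 3) := by
    have he : (0:ℝ) < Real.exp (t / 3) := Real.exp_pos _
    rw [mul_comm, ← le_div_iff₀ he] at hM
    calc (μ {v | t ≤ ∑ i, v i ^ 2}).toReal ≤ (Real.sqrt 3) ^ d / Real.exp (t / 3) := hM
      _ = (Real.sqrt 3) ^ d * Real.exp (-t / 3) := by
          rw [div_eq_mul_inv, ← Real.exp_neg, neg_div]
  calc μ {v | t ≤ ∑ i, v i ^ 2} = ENNReal.ofReal (μ {v | t ≤ ∑ i, v i ^ 2}).toReal := by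
        rw [ENNReal.ofReal_toReal hfin]
    _ ≤ _ := ENNReal.ofReal_le_ofReal this

lemma three_le_exp43 : (3:ℝ) ≤ Real.exp (4/3) := by
  have h4 : (27:ℝ) < Real.exp 4 := by
    have := Real.exp_one_gt_d9
    calc (27:ℝ) < 2.7182818283 ^ 4 := by norm_num
      _ ≤ (Real.exp 1) ^ 4 := pow_le_pow_left₀ (by norm_num) Real.exp_one_gt_d9.le 4
      _ = Real.exp 4 := by rw [← Real.exp_nat_mul]; norm_num
  nlinarith [Real.exp_pos (4/3:ℝ), sq_nonneg (Real.exp (4/3)),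
    (by rw [← Real.exp_nat_mul]; norm_num : (Real.exp (4/3)) ^ (3:ℕ) = Real.exp 4)]

lemma sqrt3_le_exp23 : Real.sqrt 3 ≤ Real.exp (2/3) := by
  have h1 : Real.sqrt 3 ^ 2 ≤ Real.exp (2/3) ^ 2 := by
    rw [Real.sq_sqrt (by norm_num : (0:ℝ) ≤ 3), ← Real.exp_nat_mul]
    calc (3:ℝ) ≤ Real.exp (4/3) := three_le_exp43
      _ = Real.exp (2 * (2/3)) := by norm_num
  exact (pow_le_pow_iff_left₀ (Real.sqrt_nonneg 3) (Real.exp_pos _).le two_ne_zero).mp h1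

lemma tail_le_delta (d : ℕ) (δ : ℝ) (hδ0 : 0 < δ) (hδ1 : δ < 1) :
    (Real.sqrt 3) ^ d * Real.exp (-(2 * d + 3 * Real.log (1/δ)) / 3) ≤ δ := by
  have hlog : Real.log (1/δ) = - Real.log δ := by rw [one_div, Real.log_inv]
  have hexp : Real.exp (-(2 * d + 3 * Real.log (1/δ)) / 3)
      = Real.exp (-(2/3) * d) * δ := by
    rw [hlog, show (-(2 * (d:ℝ) + 3 * -Real.log δ) / 3) = (-(2/3) * d) + Real.log δ by ring,
      Real.exp_add, Real.exp_log hδ0]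
  rw [hexp, ← mul_assoc]
  have h1 : (Real.sqrt 3) ^ d * Real.exp (-(2/3) * d) ≤ 1 := by
    have : (Real.sqrt 3) ^ d * Real.exp (-(2/3) * d)
        = (Real.sqrt 3 * Real.exp (-(2/3))) ^ d := by
      rw [mul_pow, ← Real.exp_nat_mul]; ring_nf
    rw [this]
    apply pow_le_one₀ (by positivity)
    rw [Real.exp_neg]
    calc Real.sqrt 3 * (Real.exp (2/3))⁻¹ ≤ Real.exp (2/3) * (Real.exp (2/3))⁻¹ := by
          gcongr; exact sqrt3_le_exp23
      _ = 1 := mul_inv_cancel₀ (Real.exp_pos _).ne'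
  nlinarith


-- D1: inner of mvec
lemma inner_mvec {d : ℕ} (A : Mat d) (u v : Vec d) :
    ⟪u, mvec A v⟫ = ∑ i, ∑ j, u i * (A i j * v j) := by
  rw [PiLp.inner_apply]
  simp only [RCLike.inner_apply, conj_trivial]
  refine Finset.sum_congr rfl fun i _ => ?_
  rw [show mvec A v i = ∑ j, A i j * v j from rfl, mul_comm, Finset.mul_sum]

-- D2: mvec equals CLM application
lemma mvec_eq_clm {d : ℕ} (A : Mat d) (u : Vec d) :
    mvec A u = LinearMap.toContinuousLinearMap (Matrix.toEuclideanLin A) u := by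
  rfl

lemma abs_inner_mvec_le {d : ℕ} (A : Mat d) (h : Vec d) :
    |⟪h, mvec A h⟫| ≤ matOpNorm A * ‖h‖ ^ 2 := by
  rw [mvec_eq_clm]
  set L := LinearMap.toContinuousLinearMap (Matrix.toEuclideanLin A)
  calc |⟪h, L h⟫| ≤ ‖h‖ * ‖L h‖ := abs_real_inner_le_norm h (L h)
    _ ≤ ‖h‖ * (‖L‖ * ‖h‖) := by gcongr; exact L.le_opNorm h
    _ = matOpNorm A * ‖h‖ ^ 2 := by rw [matOpNorm]; ring

-- D3: bilinear expansion
lemma clm2_expand {d : ℕ} (F : Vec d →L[ℝ] (Vec d →L[ℝ] ℝ)) (h k : Vec d) :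
    F h k = ∑ i, ∑ j, h i * (F (EuclideanSpace.single i 1) (EuclideanSpace.single j 1) * k j) := by
  have key : ∀ x : Vec d, x = ∑ i, x i • (EuclideanSpace.single i 1 : Vec d) := by
    intro x
    have := (EuclideanSpace.basisFun (Fin d) ℝ).sum_repr x
    simpa [EuclideanSpace.basisFun_apply, EuclideanSpace.basisFun_repr] using this.symm
  conv_lhs => rw [key h]
  rw [map_sum, ContinuousLinearMap.sum_apply]
  refine Finset.sum_congr rfl fun i _ => ?_
  rw [_root_.map_smul, ContinuousLinearMap.smul_apply, smul_eq_mul]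
  conv_lhs => rw [key k]
  rw [map_sum, Finset.mul_sum]
  refine Finset.sum_congr rfl fun j _ => ?_
  rw [_root_.map_smul, smul_eq_mul]
  ring

-- D4: hessian entries
lemma hess_apply {d : ℕ} (f : Vec d → ℝ) (x : Vec d) (i j : Fin d) :
    hess f x i j = fderiv ℝ (fderiv ℝ f) x (EuclideanSpace.single i 1) (EuclideanSpace.single j 1) := by
  rw [hess]
  show iteratedFDeriv ℝ 2 f x ![_, _] = _
  rw [iteratedFDeriv_two_apply]
  simp

lemma quad_diff_bound {d : ℕ} (f : Vec d → ℝ) (y y' h : Vec d) :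
    |fderiv ℝ (fderiv ℝ f) y h h - fderiv ℝ (fderiv ℝ f) y' h h|
      ≤ matOpNorm (hess f y - hess f y') * ‖h‖ ^ 2 := by
  have expand : fderiv ℝ (fderiv ℝ f) y h h - fderiv ℝ (fderiv ℝ f) y' h h
      = ⟪h, mvec (hess f y - hess f y') h⟫ := by
    rw [inner_mvec, clm2_expand (fderiv ℝ (fderiv ℝ f) y) h h,
      clm2_expand (fderiv ℝ (fderiv ℝ f) y') h h, ← Finset.sum_sub_distrib]
    refine Finset.sum_congr rfl fun i _ => ?_
    rw [← Finset.sum_sub_distrib]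
    refine Finset.sum_congr rfl fun j _ => ?_
    rw [Matrix.sub_apply, hess_apply, hess_apply]
    ring
  rw [expand]
  exact abs_inner_mvec_le _ h

section deriv
variable {d : ℕ} {f : Vec d → ℝ} (hf : ContDiff ℝ 2 f)

lemma line_hasDerivAt (x h : Vec d) (t : ℝ) :
    HasDerivAt (fun s : ℝ => x + s • h) h t := by
  simpa using ((hasDerivAt_id t).smul_const h).const_add x

include hf in
lemma comp_line_hasDerivAt (x h : Vec d) (t : ℝ) :
    HasDerivAt (fun s : ℝ => f (x + s • h)) (fderiv ℝ f (x + t • h) h) t :=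
  ((hf.differentiable (by norm_num) _).hasFDerivAt).comp_hasDerivAt t (line_hasDerivAt x h t)

include hf in
lemma hf' : ContDiff ℝ 1 (fderiv ℝ f) := by
  have := (contDiff_succ_iff_fderiv (n := 1)).mp (by exact_mod_cast hf)
  exact this.2.2

include hf in
lemma fderiv_line_hasDerivAt (x h k : Vec d) (t : ℝ) :
    HasDerivAt (fun s : ℝ => fderiv ℝ f (x + s • h) k)
      (fderiv ℝ (fderiv ℝ f) (x + t • h) h k) t := by
  have h1 : HasDerivAt (fun s : ℝ => fderiv ℝ f (x + s • h))
      (fderiv ℝ (fderiv ℝ f) (x + t • h) h) t :=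
    (((hf' hf).differentiable one_ne_zero _).hasFDerivAt).comp_hasDerivAt t (line_hasDerivAt x h t)
  simpa using h1.clm_apply (hasDerivAt_const t k)

include hf in
lemma cont_fderiv2 : Continuous (fderiv ℝ (fderiv ℝ f)) := by
  have h1 : ContDiff ℝ 1 (fderiv ℝ f) := hf' hf
  have := (contDiff_succ_iff_fderiv (n := 0)).mp (by exact_mod_cast h1)
  exact this.2.2.continuous

end deriv

lemma taylor_sym {d : ℕ} (f : Vec d → ℝ) (γ : ℝ) (hf : ContDiff ℝ 2 f)
    (hγ : ∀ x y : Vec d, matOpNorm (hess f x - hess f y) ≤ γ * ‖x - y‖)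
    (x h : Vec d) :
    |f (x + h) - f (x - h) - 2 * fderiv ℝ f x h| ≤ γ * ‖h‖ ^ 3 / 3 := by
  set c := fderiv ℝ f x h with hc
  set φ : ℝ → ℝ := fun t =>
    fderiv ℝ f (x + t • h) h + fderiv ℝ f (x + t • (-h)) h - 2 * c with hφdef
  set φ' : ℝ → ℝ := fun s =>
    fderiv ℝ (fderiv ℝ f) (x + s • h) h h - fderiv ℝ (fderiv ℝ f) (x + s • (-h)) h h with hφ'def
  have hφd : ∀ t : ℝ, HasDerivAt φ (φ' t) t := by
    intro t
    have h1 := fderiv_line_hasDerivAt hf x h h t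
    have h2 := fderiv_line_hasDerivAt hf x (-h) h t
    have h2' : HasDerivAt (fun s : ℝ => fderiv ℝ f (x + s • (-h)) h)
        (-(fderiv ℝ (fderiv ℝ f) (x + t • (-h)) h h)) t := by
      convert h2 using 1
      rw [map_neg, ContinuousLinearMap.neg_apply]
    have := (h1.add h2').sub_const (2 * c)
    rw [hφdef, hφ'def]
    simpa [smul_neg, sub_eq_add_neg] using this
  have hφ'cont : Continuous φ' := by
    have hl : ∀ k : Vec d, Continuous fun s : ℝ =>
        fderiv ℝ (fderiv ℝ f) (x + s • k) h h := by
      intro k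
      have : Continuous fun s : ℝ => x + s • k := by continuity
      exact (((cont_fderiv2 hf).comp this).clm_apply continuous_const).clm_apply continuous_const
    exact (hl h).sub (hl (-h))
  have hφcont : Continuous φ := by
    apply continuous_iff_continuousAt.mpr
    exact fun t => (hφd t).continuousAt
  have hφ0 : φ 0 = 0 := by simp only [hφdef, zero_smul, add_zero]; ring
  -- bound on φ'
  have hφ'bd : ∀ s : ℝ, 0 ≤ s → |φ' s| ≤ 2 * γ * ‖h‖ ^ 3 * s := by
    intro s hs
    have hq := quad_diff_bound f (x + s • h) (x + s • (-h)) h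
    have hγ' := hγ (x + s • h) (x + s • (-h))
    have hnorm : ‖(x + s • h) - (x + s • (-h))‖ = 2 * s * ‖h‖ := by
      have : (x + s • h) - (x + s • (-h)) = (2 * s) • h := by
        module
      rw [this, norm_smul, Real.norm_eq_abs, abs_of_nonneg (by linarith : (0:ℝ) ≤ 2*s)]
    calc |φ' s| ≤ matOpNorm (hess f (x + s • h) - hess f (x + s • (-h))) * ‖h‖ ^ 2 := hq
      _ ≤ (γ * (2 * s * ‖h‖)) * ‖h‖ ^ 2 := by
          apply mul_le_mul_of_nonneg_right _ (by positivity)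
          rw [← hnorm]; exact hγ'
      _ = 2 * γ * ‖h‖ ^ 3 * s := by ring
  -- bound on φ
  have hφbd : ∀ t : ℝ, 0 ≤ t → |φ t| ≤ γ * ‖h‖ ^ 3 * t ^ 2 := by
    intro t ht
    have hftc : ∫ s in (0:ℝ)..t, φ' s = φ t - φ 0 :=
      intervalIntegral.integral_eq_sub_of_hasDerivAt (fun s _ => hφd s)
        (hφ'cont.intervalIntegrable 0 t)
    rw [hφ0, sub_zero] at hftc
    rw [← hftc]
    calc |∫ s in (0:ℝ)..t, φ' s| ≤ ∫ s in (0:ℝ)..t, |φ' s| := by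
          simpa using intervalIntegral.norm_integral_le_integral_norm (μ := volume) (f := φ') ht
      _ ≤ ∫ s in (0:ℝ)..t, 2 * γ * ‖h‖ ^ 3 * s := by
          apply intervalIntegral.integral_mono_on ht
          · exact (hφ'cont.abs.intervalIntegrable 0 t)
          · exact ((continuous_const.mul continuous_id).intervalIntegrable 0 t)
          · intro s hs; exact hφ'bd s hs.1
      _ = γ * ‖h‖ ^ 3 * t ^ 2 := by
          rw [intervalIntegral.integral_const_mul, integral_id]
          ring
  -- main FTC
  set g : ℝ → ℝ := fun t => f (x + t • h) - f (x + t • (-h)) - 2 * t * c with hgdef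
  have hgd : ∀ t : ℝ, HasDerivAt g (φ t) t := by
    intro t
    have h1 := comp_line_hasDerivAt hf x h t
    have h2 := comp_line_hasDerivAt hf x (-h) t
    have h2' : HasDerivAt (fun s : ℝ => f (x + s • (-h)))
        (-(fderiv ℝ f (x + t • (-h)) h)) t := by
      convert h2 using 1; rw [map_neg]
    have h3 : HasDerivAt (fun s : ℝ => 2 * s * c) (2 * c) t := by
      simpa [mul_assoc, mul_comm] using (hasDerivAt_id t).const_mul (2 * c)
    have := (h1.sub h2').sub h3
    refine this.congr_deriv ?_
    simp only [hφdef]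
    ring
  have hftc2 : ∫ t in (0:ℝ)..1, φ t = g 1 - g 0 :=
    intervalIntegral.integral_eq_sub_of_hasDerivAt (fun t _ => hgd t)
      (hφcont.intervalIntegrable 0 1)
  have hg1 : g 1 = f (x + h) - f (x - h) - 2 * c := by
    simp [hgdef, sub_eq_add_neg]
  have hg0 : g 0 = 0 := by simp [hgdef]
  rw [← hg1, ← sub_zero (g 1), ← hg0, ← hftc2]
  calc |∫ t in (0:ℝ)..1, φ t| ≤ ∫ t in (0:ℝ)..1, |φ t| := by
        simpa using intervalIntegral.norm_integral_le_integral_norm (μ := volume) (f := φ) (by norm_num : (0:ℝ) ≤ 1)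
    _ ≤ ∫ t in (0:ℝ)..1, γ * ‖h‖ ^ 3 * t ^ 2 := by
        apply intervalIntegral.integral_mono_on (by norm_num)
        · exact (hφcont.abs.intervalIntegrable 0 1)
        · exact ((continuous_const.mul (continuous_pow 2)).intervalIntegrable 0 1)
        · intro t ht; exact hφbd t ht.1
    _ = γ * ‖h‖ ^ 3 / 3 := by
        rw [intervalIntegral.integral_const_mul, integral_pow]
        ring

lemma inner_eq_dot {d : ℕ} (u v : Vec d) : ⟪u, v⟫ = (toPi u) ⬝ᵥ (toPi v) := by
  rw [PiLp.inner_apply]; simp [dotProduct, toPi, mul_comm]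

lemma psd_sqrt_transpose {d : ℕ} {A : Mat d} (hA : A.PosSemidef) : hA.sqrtᵀ = hA.sqrt := by
  unfold Matrix.PosSemidef.sqrt
  rw [Matrix.star_eq_conjTranspose, conjTranspose_eq_transpose_of_trivial,
    transpose_mul, transpose_mul, transpose_transpose, diagonal_transpose, mul_assoc]

lemma psd_sqrt_mul_self {d : ℕ} {A : Mat d} (hA : A.PosSemidef) : hA.sqrt * hA.sqrt = A := by
  unfold Matrix.PosSemidef.sqrt
  have hU : (star hA.1.eigenvectorUnitary : Mat d) * (hA.1.eigenvectorUnitary : Mat d) = 1 :=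
    Unitary.coe_star_mul_self _
  have hD : diagonal (RCLike.ofReal ∘ (√·) ∘ hA.1.eigenvalues : Fin d → ℝ) * diagonal (RCLike.ofReal ∘ (√·) ∘ hA.1.eigenvalues : Fin d → ℝ)
      = diagonal (RCLike.ofReal ∘ hA.1.eigenvalues : Fin d → ℝ) := by
    rw [diagonal_mul_diagonal]
    congr 1; funext i
    simp [Real.mul_self_sqrt (hA.eigenvalues_nonneg i)]
  conv_rhs => rw [hA.1.spectral_theorem]
  rw [show ∀ a b c e f g : Mat d, a * b * c * (e * f * g) = a * (b * (c * e) * f) * g by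
    intros; simp only [Matrix.mul_assoc], hU, Matrix.mul_one, hD]
  simp [Unitary.conjStarAlgAut_apply, Matrix.mul_assoc]

lemma mvec_sqrt_sq_le {d : ℕ} {τ : ℝ} (hτ : 0 < τ) {S : Mat d} (hS : S.PosDef)
    (hSle : loeLE S (τ⁻¹ • 1)) (u : Vec d) :
    ‖mvec hS.posSemidef.sqrt u‖ ^ 2 ≤ τ⁻¹ * ‖u‖ ^ 2 := by
  set Q := hS.posSemidef.sqrt with hQ
  have hQherm : Qᵀ = Q := psd_sqrt_transpose hS.posSemidef
  have hQQ : Q * Q = S := psd_sqrt_mul_self hS.posSemidef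
  have h1 : ‖mvec Q u‖ ^ 2 = (toPi u) ⬝ᵥ (S.mulVec (toPi u)) := by
    rw [← real_inner_self_eq_norm_sq, inner_eq_dot]
    have : toPi (mvec Q u) = Q.mulVec (toPi u) := rfl
    rw [this, Matrix.dotProduct_mulVec, ← Matrix.mulVec_transpose, hQherm,
      Matrix.mulVec_mulVec, hQQ, dotProduct_comm]
  have h2 : (0:ℝ) ≤ (toPi u) ⬝ᵥ ((τ⁻¹ • 1 - S).mulVec (toPi u)) := by
    have := hSle.dotProduct_mulVec_nonneg (toPi u)
    simpa using this
  rw [Matrix.sub_mulVec, dotProduct_sub, Matrix.smul_mulVec, Matrix.one_mulVec,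
    dotProduct_smul] at h2
  have h3 : (toPi u) ⬝ᵥ (toPi u) = ‖u‖ ^ 2 := by
    rw [← real_inner_self_eq_norm_sq, inner_eq_dot]
  rw [h1]
  rw [h3, smul_eq_mul] at h2
  linarith


/-- high-probability bound on the Taylor remainder term
`ν = (f(μ+αΣ^{1/2}u) − f(μ−αΣ^{1/2}u) − 2α⟨∇f(μ), Σ^{1/2}u⟩)/(2α)`. -/
theorem stmt8 {d : ℕ} (hd : 1 ≤ d) (f : Vec d → ℝ) (γ : ℝ) (hγ0 : 0 ≤ γ)
    (hf : ContDiff ℝ 2 f)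
    (hγ : ∀ x y : Vec d, matOpNorm (hess f x - hess f y) ≤ γ * ‖x - y‖)
    (μ : Vec d) (α : ℝ) (hα : 0 < α) (τ : ℝ) (hτ : 0 < τ)
    (S : Mat d) (hSsymm : S.IsSymm) (hS : S.PosDef) (hSle : loeLE S (τ⁻¹ • 1))
    (δ : ℝ) (hδ0 : 0 < δ) (hδ1 : δ < 1) :
    ENNReal.ofReal (1 - δ)
      ≤ gaussD d {u : Vec d |
          |(f (μ + α • mvec hS.posSemidef.sqrt u) - f (μ - α • mvec hS.posSemidef.sqrt u)
              - 2 * α * ⟪gradient f μ, mvec hS.posSemidef.sqrt u⟫) / (2 * α)|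
            ≤ γ * α ^ 2 * (2 * (d : ℝ) + 3 * Real.log (1 / δ)) ^ (3 / 2 : ℝ)
                / (6 * τ ^ (3 / 2 : ℝ))} := by
  
  have hgrad : ∀ w : Vec d, ⟪gradient f μ, w⟫ = fderiv ℝ f μ w := by
    intro w
    rw [gradient]
    exact InnerProductSpace.toDual_symm_apply
  set L := Real.log (1 / δ) with hLdef
  set t : ℝ := 2 * (d : ℝ) + 3 * L with htdef
  have hL0 : 0 < L := Real.log_pos (one_lt_one_div hδ0 hδ1)
  have hd0 : (0:ℝ) ≤ (d : ℝ) := Nat.cast_nonneg d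
  have ht0 : (0:ℝ) ≤ t := by rw [htdef]; linarith
  have htau32 : (0:ℝ) < τ ^ (3/2 : ℝ) := Real.rpow_pos_of_pos hτ _
  -- event inclusion
  have hsub : {u : Vec d | ‖u‖ ^ 2 ≤ t} ⊆ {u : Vec d |
      |(f (μ + α • mvec hS.posSemidef.sqrt u) - f (μ - α • mvec hS.posSemidef.sqrt u)
          - 2 * α * ⟪gradient f μ, mvec hS.posSemidef.sqrt u⟫) / (2 * α)|
        ≤ γ * α ^ 2 * t ^ (3 / 2 : ℝ) / (6 * τ ^ (3 / 2 : ℝ))} := by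
    intro u hu
    simp only [Set.mem_setOf_eq] at hu ⊢
    set w : Vec d := mvec hS.posSemidef.sqrt u with hw
    have htay := taylor_sym f γ hf hγ μ (α • w)
    have hfd : fderiv ℝ f μ (α • w) = α * fderiv ℝ f μ w := by
      rw [_root_.map_smul, smul_eq_mul]
    have hnum : f (μ + α • w) - f (μ - α • w) - 2 * α * ⟪gradient f μ, w⟫
        = f (μ + α • w) - f (μ - α • w) - 2 * fderiv ℝ f μ (α • w) := by
      rw [hgrad w, hfd]; ring
    have hhnorm : ‖α • w‖ = α * ‖w‖ := by
      rw [norm_smul, Real.norm_eq_abs, abs_of_pos hα]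
    have hb1 : |(f (μ + α • w) - f (μ - α • w) - 2 * α * ⟪gradient f μ, w⟫) / (2 * α)|
        ≤ γ * α ^ 2 * ‖w‖ ^ 3 / 6 := by
      rw [hnum, abs_div, abs_of_pos (by linarith : (0:ℝ) < 2 * α)]
      rw [div_le_iff₀ (by linarith : (0:ℝ) < 2 * α)]
      calc |f (μ + α • w) - f (μ - α • w) - 2 * fderiv ℝ f μ (α • w)|
          ≤ γ * ‖α • w‖ ^ 3 / 3 := htay
        _ = γ * α ^ 2 * ‖w‖ ^ 3 / 6 * (2 * α) := by rw [hhnorm]; ring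
    -- bound on ‖w‖³
    have hw2 : ‖w‖ ^ 2 ≤ τ⁻¹ * ‖u‖ ^ 2 := mvec_sqrt_sq_le hτ hS hSle u
    have hw2' : ‖w‖ ^ 2 ≤ τ⁻¹ * t := by
      calc ‖w‖ ^ 2 ≤ τ⁻¹ * ‖u‖ ^ 2 := hw2
        _ ≤ τ⁻¹ * t := by gcongr
    have hwle : ‖w‖ ≤ Real.sqrt (τ⁻¹ * t) := by
      rw [show ‖w‖ = Real.sqrt (‖w‖ ^ 2) by rw [Real.sqrt_sq (norm_nonneg w)]]
      exact Real.sqrt_le_sqrt hw2'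
    have hw3 : ‖w‖ ^ 3 ≤ t ^ (3/2 : ℝ) / τ ^ (3/2 : ℝ) := by
      have h1 : ‖w‖ ^ 3 ≤ Real.sqrt (τ⁻¹ * t) ^ 3 :=
        pow_le_pow_left₀ (norm_nonneg w) hwle 3
      have h2 : Real.sqrt (τ⁻¹ * t) ^ 3 = (τ⁻¹ * t) ^ (3/2 : ℝ) := by
        rw [Real.sqrt_eq_rpow, ← Real.rpow_natCast ((τ⁻¹ * t) ^ ((1:ℝ)/2)) 3,
          ← Real.rpow_mul (by positivity)]
        norm_num
      have h3 : (τ⁻¹ * t) ^ (3/2 : ℝ) = t ^ (3/2 : ℝ) / τ ^ (3/2 : ℝ) := by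
        rw [Real.mul_rpow (by positivity) ht0, Real.inv_rpow hτ.le]
        rw [inv_mul_eq_div]
      rw [h2, h3] at h1
      exact h1
    calc |(f (μ + α • w) - f (μ - α • w) - 2 * α * ⟪gradient f μ, w⟫) / (2 * α)|
        ≤ γ * α ^ 2 * ‖w‖ ^ 3 / 6 := hb1
      _ ≤ γ * α ^ 2 * (t ^ (3/2 : ℝ) / τ ^ (3/2 : ℝ)) / 6 := by gcongr
      _ = γ * α ^ 2 * t ^ (3/2 : ℝ) / (6 * τ ^ (3/2 : ℝ)) := by
          ring
  -- measure computation
  set E0 : Set (Vec d) := {u : Vec d | ‖u‖ ^ 2 ≤ t} with hE0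
  have hE0meas : MeasurableSet E0 :=
    measurableSet_le ((continuous_norm.pow 2).measurable) measurable_const
  set piμ := Measure.pi fun _ : Fin d => gaussianReal 0 1 with hpiμ
  have hmap : gaussD d E0 = piμ {v : Fin d → ℝ | ∑ i, v i ^ 2 ≤ t} := by
    rw [gaussD, Measure.map_apply (MeasurableEquiv.measurable _) hE0meas]
    congr 1
    ext v
    simp only [Set.mem_preimage, hE0, Set.mem_setOf_eq]
    have hcoord : ∀ i, ((MeasurableEquiv.toLp 2 (Fin d → ℝ)) v) i = v i := fun _ => rfl
    have : ‖(MeasurableEquiv.toLp 2 (Fin d → ℝ)) v‖ ^ 2 = ∑ i, v i ^ 2 := by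
      rw [EuclideanSpace.norm_eq, Real.sq_sqrt (by positivity)]
      refine Finset.sum_congr rfl fun i _ => ?_
      rw [hcoord i, Real.norm_eq_abs, sq_abs]
    rw [this]
  haveI : IsProbabilityMeasure piμ := by infer_instance
  have hAmeas : MeasurableSet {v : Fin d → ℝ | ∑ i, v i ^ 2 ≤ t} := by
    apply measurableSet_le _ measurable_const
    exact Finset.measurable_sum _ fun i _ => (measurable_pi_apply i).pow_const 2
  have htail : piμ {v : Fin d → ℝ | ∑ i, v i ^ 2 ≤ t}ᶜ ≤ ENNReal.ofReal δ := by
    have hss : {v : Fin d → ℝ | ∑ i, v i ^ 2 ≤ t}ᶜ ⊆ {v : Fin d → ℝ | t ≤ ∑ i, v i ^ 2} := by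
      intro v hv
      simp only [Set.mem_compl_iff, Set.mem_setOf_eq, not_le] at hv
      exact le_of_lt hv
    refine (measure_mono hss).trans ((chisq_tail d t).trans ?_)
    exact ENNReal.ofReal_le_ofReal (tail_le_delta d δ hδ0 hδ1)
  have hmain : ENNReal.ofReal (1 - δ) ≤ piμ {v : Fin d → ℝ | ∑ i, v i ^ 2 ≤ t} := by
    have hsum : piμ {v : Fin d → ℝ | ∑ i, v i ^ 2 ≤ t}
        + piμ {v : Fin d → ℝ | ∑ i, v i ^ 2 ≤ t}ᶜ = 1 := by
      rw [measure_add_measure_compl hAmeas, measure_univ]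
    have h1 : ENNReal.ofReal (1 - δ) + ENNReal.ofReal δ ≤ 1 := by
      rw [← ENNReal.ofReal_add (by linarith) hδ0.le]
      simp
    have h2 : ENNReal.ofReal (1 - δ) + ENNReal.ofReal δ
        ≤ piμ {v : Fin d → ℝ | ∑ i, v i ^ 2 ≤ t} + ENNReal.ofReal δ := by
      refine h1.trans ?_
      rw [← hsum]
      gcongr
    exact ENNReal.le_of_add_le_add_right ENNReal.ofReal_ne_top h2
  calc ENNReal.ofReal (1 - δ) ≤ piμ {v : Fin d → ℝ | ∑ i, v i ^ 2 ≤ t} := hmain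
    _ = gaussD d E0 := hmap.symm
    _ ≤ _ := measure_mono hsub
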